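/- Hessian formula for conditional entropy: under the assumption that the posteriors P_θ(s_0|y) are independent of θ, the Hessian satisfies ∇²_θ H(S_0|Y;θ) = E_{y~P_θ}[ H(S_0|Y=y) (∇²_θ log P_θ(y) + ∇_θ log P_θ(y) ∇_θ log P_θ(y)^T) ]; in particular if ‖∇_θ log π_θ(a|h)‖ ≤ B and ‖∇²_θ log π_θ(a|h)‖ ≤ C uniformly, then ‖∇²_θ H(S_0|Y;θ)‖ ≤ log|S_0| · ((T+1)C + (T+1)²B²), so H(S_0|Y;θ) is Lipschitz-smooth in θ. -/

import Mathlib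

open BigOperators Finset

section Aux

variable {E : Type*} [NormedAddCommGroup E] [NormedSpace ℝ E]

private lemma aux_norm_smul_le {E F : Type*} [NormedAddCommGroup E] [NormedSpace ℝ E]
    [SeminormedAddCommGroup F] [NormedSpace ℝ F]
    (c : ℝ) (x : E →L[ℝ] F) : ‖c • x‖ ≤ ‖c‖ * ‖x‖ :=
  ContinuousLinearMap.opNorm_smul_le c x

private lemma aux_smul_smulRight (c : ℝ) (A B : E →L[ℝ] ℝ) :
    (c • A).smulRight B = c • A.smulRight B := by
  ext v
  simp [ContinuousLinearMap.smulRight_apply, smul_smul]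

/-- Hessian of a positive `C²` function in terms of its log. -/
private lemma aux_hess_formula (p : E → ℝ) (hp : ContDiff ℝ 2 p) (hpos : ∀ x, 0 < p x)
    (θ₀ : E) :
    fderiv ℝ (fun θ => fderiv ℝ p θ) θ₀ =
      p θ₀ • (fderiv ℝ (fun θ => fderiv ℝ (fun θ' => Real.log (p θ')) θ) θ₀ +
        (fderiv ℝ (fun θ' => Real.log (p θ')) θ₀).smulRight
          (fderiv ℝ (fun θ' => Real.log (p θ')) θ₀)) := by
  set L : E → ℝ := fun θ => Real.log (p θ) with hLdef
  have hLC2 : ContDiff ℝ 2 L := hp.log (fun x => (hpos x).ne')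
  have hLd : Differentiable ℝ L := hLC2.differentiable (by norm_num)
  have hDL : Differentiable ℝ (fun θ => fderiv ℝ L θ) :=
    (hLC2.fderiv_right (m := 1) (by norm_num)).differentiable (by norm_num)
  have hpexp : p = fun θ => Real.exp (L θ) := by
    funext θ; rw [hLdef]; simp [Real.exp_log (hpos θ)]
  have hdp : ∀ θ, fderiv ℝ p θ = p θ • fderiv ℝ L θ := by
    intro θ
    conv_lhs => rw [hpexp]
    rw [fderiv_exp (hLd θ)]
    congr 1
    rw [hLdef, Real.exp_log (hpos θ)]
  have key : fderiv ℝ (fun θ => fderiv ℝ p θ) θ₀ =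
      fderiv ℝ (fun θ => p θ • fderiv ℝ L θ) θ₀ := by
    congr 1; funext θ; exact hdp θ
  rw [key, fderiv_fun_smul (hp.differentiable (by norm_num) θ₀) (hDL θ₀), hdp θ₀,
    aux_smul_smulRight, ← smul_add]

end Aux

set_option maxHeartbeats 1600000 in
/-- Hessian formula and Lipschitz-smoothness of conditional entropy. -/
theorem hessian_condEntropy {d T : ℕ} {Y Hist Act S₀ : Type*} [Fintype Y] [Fintype S₀]
    (g : Y → ℝ) (hg : ∀ y, 0 < g y)
    (hist : Y → Fin (T+1) → Hist) (act : Y → Fin (T+1) → Act)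
    (π : EuclideanSpace ℝ (Fin d) → Hist → Act → ℝ)
    (hπ_pos : ∀ θ h a, 0 < π θ h a)
    (hπ_C2 : ∀ h a, ContDiff ℝ 2 (fun θ => π θ h a))
    (hp_sum : ∀ θ, ∑ y, g y * ∏ t, π θ (hist y t) (act y t) = 1)
    (hpost : Y → ℝ)
    (hpost_nonneg : ∀ y, 0 ≤ hpost y)
    (hpost_le : ∀ y, hpost y ≤ Real.log (Fintype.card S₀))
    (B C : ℝ) (hB0 : 0 ≤ B) (hC0 : 0 ≤ C)
    (hB : ∀ θ h a, ‖fderiv ℝ (fun θ' => Real.log (π θ' h a)) θ‖ ≤ B)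
    (hC : ∀ θ h a,
      ‖fderiv ℝ (fun θ' => fderiv ℝ (fun θ'' => Real.log (π θ'' h a)) θ') θ‖ ≤ C)
    (θ₀ : EuclideanSpace ℝ (Fin d)) :
    (fderiv ℝ (fun θ => fderiv ℝ
        (fun θ' => ∑ y, (g y * ∏ t, π θ' (hist y t) (act y t)) * hpost y) θ) θ₀ =
      ∑ y, ((g y * ∏ t, π θ₀ (hist y t) (act y t)) * hpost y) •
        (fderiv ℝ (fun θ => fderiv ℝ
            (fun θ' => Real.log (g y * ∏ t, π θ' (hist y t) (act y t))) θ) θ₀ +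
          (fderiv ℝ (fun θ' => Real.log (g y * ∏ t, π θ' (hist y t) (act y t))) θ₀).smulRight
            (fderiv ℝ (fun θ' => Real.log (g y * ∏ t, π θ' (hist y t) (act y t))) θ₀))) ∧
    ‖fderiv ℝ (fun θ => fderiv ℝ
        (fun θ' => ∑ y, (g y * ∏ t, π θ' (hist y t) (act y t)) * hpost y) θ) θ₀‖ ≤
      Real.log (Fintype.card S₀) *
        (((T : ℝ) + 1) * C + ((T : ℝ) + 1) ^ 2 * B ^ 2) := by
  -- notation
  set p : Y → EuclideanSpace ℝ (Fin d) → ℝ := fun y θ => g y * ∏ t, π θ (hist y t) (act y t) with hpdef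
  have hp_pos : ∀ y θ, 0 < p y θ := fun y θ =>
    mul_pos (hg y) (Finset.prod_pos fun t _ => hπ_pos θ _ _)
  have hp_C2 : ∀ y, ContDiff ℝ 2 (p y) := fun y =>
    contDiff_const.mul (contDiff_prod fun t _ => hπ_C2 _ _)
  have hp_diff : ∀ y, Differentiable ℝ (p y) := fun y =>
    (hp_C2 y).differentiable (by norm_num)
  have hDp_diff : ∀ y, Differentiable ℝ (fun θ => fderiv ℝ (p y) θ) := fun y =>
    ((hp_C2 y).fderiv_right (m := 1) (by norm_num)).differentiable (by norm_num)
  -- first derivative of the entropy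
  have inner_eq : (fun θ => fderiv ℝ
      (fun θ' => ∑ y, p y θ' * hpost y) θ) =
      fun θ => ∑ y, hpost y • fderiv ℝ (p y) θ := by
    funext θ
    rw [fderiv_fun_sum (fun y _ => (hp_diff y θ).mul_const _)]
    exact Finset.sum_congr rfl fun y _ => fderiv_mul_const (hp_diff y θ) _
  -- Hessian of the entropy
  have hess_eq : fderiv ℝ (fun θ => fderiv ℝ
      (fun θ' => ∑ y, p y θ' * hpost y) θ) θ₀ =
      ∑ y, hpost y • fderiv ℝ (fun θ => fderiv ℝ (p y) θ) θ₀ := by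
    rw [inner_eq, fderiv_fun_sum (fun y _ => ((hDp_diff y) θ₀).fun_const_smul _)]
    exact Finset.sum_congr rfl fun y _ => fderiv_fun_const_smul ((hDp_diff y) θ₀) _
  have main : fderiv ℝ (fun θ => fderiv ℝ
      (fun θ' => ∑ y, p y θ' * hpost y) θ) θ₀ =
      ∑ y, (p y θ₀ * hpost y) •
        (fderiv ℝ (fun θ => fderiv ℝ (fun θ' => Real.log (p y θ')) θ) θ₀ +
          (fderiv ℝ (fun θ' => Real.log (p y θ')) θ₀).smulRight
            (fderiv ℝ (fun θ' => Real.log (p y θ')) θ₀)) := by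
    rw [hess_eq]
    refine Finset.sum_congr rfl fun y _ => ?_
    rw [aux_hess_formula (p y) (hp_C2 y) (hp_pos y) θ₀, smul_smul, mul_comm]
  refine ⟨main, ?_⟩
  -- the norm bound
  rw [main]
  -- log of the posteriors: sum formula
  have hℓC2 : ∀ y (t : Fin (T+1)), ContDiff ℝ 2
      (fun θ => Real.log (π θ (hist y t) (act y t))) := fun y t =>
    (hπ_C2 _ _).log (fun θ => (hπ_pos θ _ _).ne')
  have hL_eq : ∀ y, (fun θ => Real.log (p y θ)) =
      fun θ => Real.log (g y) + ∑ t, Real.log (π θ (hist y t) (act y t)) := by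
    intro y
    funext θ
    rw [hpdef]
    rw [Real.log_mul (hg y).ne' (Finset.prod_pos fun t _ => hπ_pos θ _ _).ne',
      Real.log_prod (fun t _ => (hπ_pos θ _ _).ne')]
  have hdL : ∀ y θ, fderiv ℝ (fun θ' => Real.log (p y θ')) θ =
      ∑ t, fderiv ℝ (fun θ' => Real.log (π θ' (hist y t) (act y t))) θ := by
    intro y θ
    rw [hL_eq y, fderiv_const_add,
      fderiv_fun_sum (fun t _ => (hℓC2 y t).differentiable (by norm_num) θ)]
  have hd2L : ∀ y, fderiv ℝ (fun θ => fderiv ℝ (fun θ' => Real.log (p y θ')) θ) θ₀ =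
      ∑ t, fderiv ℝ (fun θ => fderiv ℝ
        (fun θ' => Real.log (π θ' (hist y t) (act y t))) θ) θ₀ := by
    intro y
    have : (fun θ => fderiv ℝ (fun θ' => Real.log (p y θ')) θ) =
        fun θ => ∑ t, fderiv ℝ (fun θ' => Real.log (π θ' (hist y t) (act y t))) θ :=
      funext (hdL y)
    rw [this, fderiv_fun_sum (fun t _ =>
      (((hℓC2 y t).fderiv_right (m := 1) (by norm_num)).differentiable (by norm_num)) θ₀)]
  -- norm bounds on the log-derivatives
  have hDbound : ∀ y, ‖fderiv ℝ (fun θ' => Real.log (p y θ')) θ₀‖ ≤ ((T : ℝ) + 1) * B := by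
    intro y
    rw [hdL y θ₀]
    calc ‖∑ t, fderiv ℝ (fun θ' => Real.log (π θ' (hist y t) (act y t))) θ₀‖
        ≤ ∑ t : Fin (T+1), B := norm_sum_le_of_le _ (fun t _ => hB θ₀ _ _)
      _ = ((T : ℝ) + 1) * B := by
          rw [Finset.sum_const, Finset.card_univ, Fintype.card_fin, nsmul_eq_mul]
          push_cast; ring
  have hHbound : ∀ y, ‖fderiv ℝ (fun θ => fderiv ℝ
      (fun θ' => Real.log (p y θ')) θ) θ₀‖ ≤ ((T : ℝ) + 1) * C := by
    intro y
    rw [hd2L y]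
    calc ‖∑ t, fderiv ℝ (fun θ => fderiv ℝ
          (fun θ' => Real.log (π θ' (hist y t) (act y t))) θ) θ₀‖
        ≤ ∑ t : Fin (T+1), C := norm_sum_le_of_le (E := EuclideanSpace ℝ (Fin d) →L[ℝ] EuclideanSpace ℝ (Fin d) →L[ℝ] ℝ) _ (fun t _ => hC θ₀ _ _)
      _ = ((T : ℝ) + 1) * C := by
          rw [Finset.sum_const, Finset.card_univ, Fintype.card_fin, nsmul_eq_mul]
          push_cast; ring
  -- the per-y matrix bound
  set K : ℝ := ((T : ℝ) + 1) * C + ((T : ℝ) + 1) ^ 2 * B ^ 2 with hKdef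
  have hK0 : 0 ≤ K := by
    have h1 : (0:ℝ) ≤ (T : ℝ) + 1 := by positivity
    positivity
  have hMbound : ∀ y, ‖fderiv ℝ (fun θ => fderiv ℝ
      (fun θ' => Real.log (p y θ')) θ) θ₀ +
      (fderiv ℝ (fun θ' => Real.log (p y θ')) θ₀).smulRight
        (fderiv ℝ (fun θ' => Real.log (p y θ')) θ₀)‖ ≤ K := by
    intro y
    refine (norm_add_le (E := EuclideanSpace ℝ (Fin d) →L[ℝ] EuclideanSpace ℝ (Fin d) →L[ℝ] ℝ) _ _).trans ?_
    rw [ContinuousLinearMap.norm_smulRight_apply, hKdef]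
    have h1 := hHbound y
    have h2 := hDbound y
    have h3 : ‖fderiv ℝ (fun θ' => Real.log (p y θ')) θ₀‖ *
        ‖fderiv ℝ (fun θ' => Real.log (p y θ')) θ₀‖ ≤
        (((T : ℝ) + 1) * B) * (((T : ℝ) + 1) * B) :=
      mul_le_mul h2 h2 (norm_nonneg _) (by positivity)
    have h4 : ((T : ℝ) + 1) ^ 2 * B ^ 2 = (((T : ℝ) + 1) * B) * (((T : ℝ) + 1) * B) := by ring
    linarith
  -- nonnegativity of log |S₀|
  have hYne : (Finset.univ : Finset Y).Nonempty := by
    rcases (Finset.univ : Finset Y).eq_empty_or_nonempty with h | h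
    · exfalso
      have := hp_sum θ₀
      rw [h] at this
      simp at this
    · exact h
  obtain ⟨y₀, -⟩ := hYne
  have hlogS : 0 ≤ Real.log (Fintype.card S₀) :=
    (hpost_nonneg y₀).trans (hpost_le y₀)
  -- assemble
  calc ‖∑ y, (p y θ₀ * hpost y) •
        (fderiv ℝ (fun θ => fderiv ℝ (fun θ' => Real.log (p y θ')) θ) θ₀ +
          (fderiv ℝ (fun θ' => Real.log (p y θ')) θ₀).smulRight
            (fderiv ℝ (fun θ' => Real.log (p y θ')) θ₀))‖
      ≤ ∑ y, (p y θ₀ * (Real.log (Fintype.card S₀) * K)) := by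
        refine (norm_sum_le (E := EuclideanSpace ℝ (Fin d) →L[ℝ] EuclideanSpace ℝ (Fin d) →L[ℝ] ℝ) _ _).trans (Finset.sum_le_sum fun y _ => ?_)
        refine le_trans (aux_norm_smul_le _ _) ?_
        rw [Real.norm_eq_abs,
          abs_of_nonneg (mul_nonneg (hp_pos y θ₀).le (hpost_nonneg y))]
        calc p y θ₀ * hpost y * ‖_‖ ≤ p y θ₀ * hpost y * K :=
              mul_le_mul_of_nonneg_left (hMbound y)
                (mul_nonneg (hp_pos y θ₀).le (hpost_nonneg y))
          _ ≤ p y θ₀ * Real.log (Fintype.card S₀) * K :=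
              mul_le_mul_of_nonneg_right
                (mul_le_mul_of_nonneg_left (hpost_le y) (hp_pos y θ₀).le) hK0
          _ = p y θ₀ * (Real.log (Fintype.card S₀) * K) := by ring
    _ = Real.log (Fintype.card S₀) * K := by
        rw [← Finset.sum_mul, hp_sum θ₀, one_mul]
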